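/- Safety invariance of the vertex-network policy: suppose for every state x ∈ 𝒳 the set 𝒰ₓ = {u ∈ 𝒰 : f(x) + H(x)u ∈ 𝒳} is nonempty and the policy outputs u(x) ∈ convexHull(Vₓ) where Vₓ is a finite set of points contained in 𝒰ₓ. If 𝒳 is convex and x₀ ∈ 𝒳, then the trajectory defined by x_{t+1} = f(x_t) + H(x_t)u(x_t) satisfies x_t ∈ 𝒳 and u(x_t) ∈ 𝒰 for all t. -/
import Mathlib


theorem stmt_7 (n m : ℕ) (f : (Fin n → ℝ) → (Fin n → ℝ))
    (H : (Fin n → ℝ) → Matrix (Fin n) (Fin m) ℝ)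
    (X : Set (Fin n → ℝ)) (U : Set (Fin m → ℝ))
    (hX : Convex ℝ X) (hU : Convex ℝ U)
    (V : (Fin n → ℝ) → Finset (Fin m → ℝ))
    (pol : (Fin n → ℝ) → (Fin m → ℝ))
    (hV : ∀ x ∈ X, (V x : Set (Fin m → ℝ)) ⊆
      {u ∈ U | f x + (H x).mulVec u ∈ X})
    (hne : ∀ x ∈ X, {u ∈ U | f x + (H x).mulVec u ∈ X}.Nonempty)
    (hpol : ∀ x ∈ X, pol x ∈ convexHull ℝ (V x : Set (Fin m → ℝ)))
    (x₀ : Fin n → ℝ) (hx₀ : x₀ ∈ X)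
    (traj : ℕ → (Fin n → ℝ))
    (htraj0 : traj 0 = x₀)
    (htraj : ∀ t, traj (t + 1) = f (traj t) + (H (traj t)).mulVec (pol (traj t))) :
    ∀ t, traj t ∈ X ∧ pol (traj t) ∈ U := by
  have key : ∀ x ∈ X, pol x ∈ {u ∈ U | f x + (H x).mulVec u ∈ X} := by
    intro x hx
    have hconv : Convex ℝ {u ∈ U | f x + (H x).mulVec u ∈ X} := by
      intro u hu v hv a b ha hb hab
      refine ⟨hU hu.1 hv.1 ha hb hab, ?_⟩
      have : f x + (H x).mulVec (a • u + b • v)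
          = a • (f x + (H x).mulVec u) + b • (f x + (H x).mulVec v) := by
        have hf : f x = a • f x + b • f x := by
          rw [← add_smul, hab, one_smul]
        rw [Matrix.mulVec_add, Matrix.mulVec_smul, Matrix.mulVec_smul,
          smul_add, smul_add]
        nth_rewrite 1 [hf]
        abel
      rw [this]
      exact hX hu.2 hv.2 ha hb hab
    have := convexHull_min (hV x hx) hconv
    exact this (hpol x hx)
  have hXmem : ∀ t, traj t ∈ X := by
    intro t
    induction t with
    | zero => rw [htraj0]; exact hx₀
    | succ k ih =>
        rw [htraj k]
        exact (key _ ih).2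
  exact fun t => ⟨hXmem t, (key _ (hXmem t)).1⟩
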